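/- a^t-tight closure of ideals is glueable: let p be a prime, let R be a Noetherian commutative ring of characteristic p, let n ≥ 0, let a₁,…,aₙ be ideals of R with aᵢ ∩ R° ≠ ∅ for each i, and let t₁,…,tₙ be nonnegative real numbers. Let (f_α)_{α∈A} be elements of R and let g be an element of the radical of the ideal generated by the f_α. Let J be an ideal of R and z ∈ R such that for every α ∈ A, the image z/1 of z in R_{f_α} lies in the (a₁·R_{f_α})^{t₁}⋯(aₙ·R_{f_α})^{tₙ}-tight closure of J·R_{f_α}. Then the image z/1 of z in R_g lies in the (a₁·R_g)^{t₁}⋯(aₙ·R_g)^{tₙ}-tight closure of J·R_g. -/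

import Mathlib

/-- `offMinimal S` is `S°`, the set of elements of `S` lying outside every minimal prime. -/
def offMinimal (S : Type*) [CommRing S] : Set S :=
  {c : S | ∀ P ∈ minimalPrimes S, c ∉ P}

/-- The bracket power `J^[q]`, generated by `q`-th powers of elements of `J`. -/
def bracketPow {S : Type*} [CommRing S] (J : Ideal S) (q : ℕ) : Ideal S :=
  Ideal.span ((fun a => a ^ q) '' (J : Set S))

/-- The tight closure `J^*` of an ideal `J` in a ring of characteristic `p`. -/
def tightClosure (p : ℕ) {S : Type*} [CommRing S] (J : Ideal S) : Set S :=
  {z : S | ∃ c ∈ offMinimal S, ∃ e₀ : ℕ, ∀ e : ℕ, e₀ ≤ e →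
    c * z ^ p ^ e ∈ bracketPow J (p ^ e)}

/-- The `a₁^{t₁} ⋯ aₙ^{tₙ}`-tight closure of an ideal `J` in a ring of characteristic `p`:
`z` belongs to it if there are `c ∈ S°` and a power `p^e₀` such that
`c ⬝ a₁^{⌈t₁ q⌉} ⋯ aₙ^{⌈tₙ q⌉} ⬝ z^q ⊆ J^[q]` for all `q = p^e ≥ p^e₀`. -/
def atTightClosure (p : ℕ) {S : Type*} [CommRing S] {n : ℕ} (a : Fin n → Ideal S)
    (t : Fin n → ℝ) (J : Ideal S) : Set S :=
  {z : S | ∃ c ∈ offMinimal S, ∃ e₀ : ℕ, ∀ e : ℕ, e₀ ≤ e →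
    ∀ x ∈ (∏ i, a i ^ ⌈t i * (p : ℝ) ^ e⌉₊ : Ideal S),
      c * x * z ^ p ^ e ∈ bracketPow J (p ^ e)}

section Aux

variable {R S : Type*} [CommRing R] [CommRing S]

lemma mem_of_mul_unit' {Q : Ideal S} {y v : S} (hv : IsUnit v)
    (h : y * v ∈ Q) : y ∈ Q := by
  obtain ⟨u, rfl⟩ := hv
  have h' := Q.mul_mem_left (↑u⁻¹) h
  have he : ((↑u⁻¹ : S) * (y * ↑u)) = y := by
    rw [mul_comm (↑u⁻¹ : S), mul_assoc, Units.mul_inv, mul_one]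
  rwa [he] at h'

lemma map_bracketPow_le (φ : R →+* S) (J : Ideal R) (q : ℕ) :
    (bracketPow J q).map φ ≤ bracketPow (J.map φ) q := by
  rw [bracketPow, Ideal.map_span]
  refine Ideal.span_le.2 ?_
  rintro _ ⟨_, ⟨a, haJ, rfl⟩, rfl⟩
  show φ (a ^ q) ∈ bracketPow (J.map φ) q
  rw [map_pow]
  exact Ideal.subset_span ⟨φ a, Ideal.mem_map_of_mem φ haJ, rfl⟩

lemma bracketPow_map_le (p : ℕ) (hp : p.Prime) (φ : R →+* S) (hpS : (p : S) = 0)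
    (J : Ideal R) (e : ℕ) :
    bracketPow (J.map φ) (p ^ e) ≤ (bracketPow J (p ^ e)).map φ := by
  cases subsingleton_or_nontrivial S
  · intro x _
    have hx : x = 0 := Subsingleton.elim _ _
    rw [hx]; exact zero_mem _
  · haveI : CharP S p := (CharP.charP_iff_prime_eq_zero hp).2 hpS
    haveI : Fact p.Prime := ⟨hp⟩
    refine Ideal.span_le.2 ?_
    rintro _ ⟨y, hy, rfl⟩
    show y ^ p ^ e ∈ (bracketPow J (p ^ e)).map φ
    have hy' : y ∈ Ideal.span (φ '' (J : Set R)) := hy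
    clear hy
    induction hy' using Submodule.span_induction with
    | mem w hw =>
      obtain ⟨b, hb, rfl⟩ := hw
      rw [← map_pow]
      exact Ideal.mem_map_of_mem φ (Ideal.subset_span ⟨b, hb, rfl⟩)
    | zero =>
      rw [zero_pow (pow_ne_zero e hp.ne_zero)]; exact zero_mem _
    | add u v _ _ hu hv =>
      rw [add_pow_char_pow]; exact add_mem hu hv
    | smul r u _ hu =>
      rw [smul_eq_mul, mul_pow]; exact Ideal.mul_mem_left _ _ hu

lemma map_prod_pow (φ : R →+* S) {n : ℕ} (a : Fin n → Ideal R) (k : Fin n → ℕ) :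
    (∏ i, a i ^ k i).map φ = ∏ i, ((a i).map φ) ^ k i := by
  let M : Ideal R →* Ideal S :=
    { toFun := Ideal.map φ
      map_one' := by simpa [Ideal.one_eq_top] using Ideal.map_top φ
      map_mul' := fun I J => Ideal.map_mul φ I J }
  show M (∏ i, a i ^ k i) = _
  rw [map_prod]
  exact Finset.prod_congr rfl fun i _ => map_pow M (a i) (k i)

/-- map of a minimal prime avoiding `x` is a minimal prime of the localization away from `x`. -/
lemma map_mem_minimalPrimes_away {x : R} {P : Ideal R} (hP : P ∈ minimalPrimes R) (hx : x ∉ P) :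
    P.map (algebraMap R (Localization.Away x)) ∈ minimalPrimes (Localization.Away x) := by
  set M := Submonoid.powers x
  set S := Localization.Away x
  have hPp : P.IsPrime := hP.1.1
  have hdisj : Disjoint (M : Set R) (P : Set R) := by
    rw [Set.disjoint_left]
    rintro y ⟨k, rfl⟩ hyP
    exact hx (hPp.mem_of_pow_mem k hyP)
  have hprime := IsLocalization.isPrime_of_isPrime_disjoint M S P hPp hdisj
  refine ⟨⟨hprime, bot_le⟩, ?_⟩
  rintro Q ⟨hQ, -⟩ hQle
  have hcQ : (Q.comap (algebraMap R S)).IsPrime := hQ.comap _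
  have hcom : Q.comap (algebraMap R S) ≤ P := by
    rw [← IsLocalization.comap_map_of_isPrime_disjoint M S hPp hdisj]
    exact Ideal.comap_mono hQle
  have hPle : P ≤ Q.comap (algebraMap R S) := hP.2 ⟨hcQ, bot_le⟩ hcom
  calc P.map (algebraMap R S) ≤ (Q.comap (algebraMap R S)).map (algebraMap R S) :=
        Ideal.map_mono hPle
    _ = Q := IsLocalization.map_comap M S Q

/-- comap of a minimal prime of a localization away from `g`. -/
lemma comap_mem_minimalPrimes_away {g : R} {Q : Ideal (Localization.Away g)}
    (hQ : Q ∈ minimalPrimes (Localization.Away g)) :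
    Q.comap (algebraMap R (Localization.Away g)) ∈ minimalPrimes R ∧
      g ∉ Q.comap (algebraMap R (Localization.Away g)) := by
  set S := Localization.Away g
  set P := Q.comap (algebraMap R S) with hPdef
  have hQp : Q.IsPrime := hQ.1.1
  have hPp : P.IsPrime := hQp.comap _
  have hgP : g ∉ P := by
    intro hgQ
    have hunit : IsUnit (algebraMap R S g) :=
      IsLocalization.map_units S (⟨g, 1, by simp⟩ : Submonoid.powers g)
    exact hQp.ne_top (Q.eq_top_of_isUnit_mem hgQ hunit)
  obtain ⟨P₀, hP₀, hP₀le⟩ := Ideal.exists_minimalPrimes_le (bot_le : ⊥ ≤ P)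
  have hP₀p : P₀.IsPrime := hP₀.1.1
  have hgP₀ : g ∉ P₀ := fun h => hgP (hP₀le h)
  have hdisj : Disjoint ((Submonoid.powers g : Submonoid R) : Set R) (P₀ : Set R) := by
    rw [Set.disjoint_left]
    rintro y ⟨k, rfl⟩ hyP
    exact hgP₀ (hP₀p.mem_of_pow_mem k hyP)
  have hmapP₀ : (P₀.map (algebraMap R S)).IsPrime :=
    IsLocalization.isPrime_of_isPrime_disjoint (Submonoid.powers g) S P₀ hP₀p hdisj
  have hle : P₀.map (algebraMap R S) ≤ Q := by
    calc P₀.map (algebraMap R S) ≤ P.map (algebraMap R S) := Ideal.map_mono hP₀le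
      _ = Q := IsLocalization.map_comap (Submonoid.powers g) S Q
  have hQeq : Q = P₀.map (algebraMap R S) := le_antisymm (hQ.2 ⟨hmapP₀, bot_le⟩ hle) hle
  have hPeq : P = P₀ := by
    rw [hPdef, hQeq]
    exact IsLocalization.comap_map_of_isPrime_disjoint (Submonoid.powers g) S hP₀p hdisj
  exact ⟨hPeq ▸ hP₀, hgP⟩

/-- elements of a minimal prime are almost nilpotent. -/
lemma exists_mul_pow_eq_zero {P : Ideal R} (hP : P ∈ minimalPrimes R) {x : R} (hx : x ∈ P) :
    ∃ u ∉ P, ∃ k : ℕ, u * x ^ k = 0 := by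
  haveI hPp : P.IsPrime := hP.1.1
  have h1 : algebraMap R (Localization.AtPrime P) x ∈
      IsLocalRing.maximalIdeal (Localization.AtPrime P) :=
    (IsLocalization.AtPrime.to_map_mem_maximal_iff _ P x).2 hx
  have h2 : IsNilpotent (algebraMap R (Localization.AtPrime P) x) :=
    haveI := Ring.KrullDimLE.of_isLocalization P hP (Localization.AtPrime P)
    Ring.KrullDimLE.isNilpotent_iff_mem_maximalIdeal.2 h1
  obtain ⟨k, hk⟩ := h2
  rw [← map_pow] at hk
  obtain ⟨u, hu⟩ := (IsLocalization.map_eq_zero_iff P.primeCompl _ _).1 hk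
  exact ⟨u, u.2, k, hu⟩

/-- pull membership in an extended ideal back. -/
lemma exists_pow_mul_mem {f x : R} {I : Ideal R}
    (h : algebraMap R (Localization.Away f) x ∈ I.map (algebraMap R (Localization.Away f))) :
    ∃ N : ℕ, f ^ N * x ∈ I := by
  obtain ⟨⟨⟨y, hy⟩, s⟩, hs⟩ := (IsLocalization.mem_map_algebraMap_iff (Submonoid.powers f) _).1 h
  obtain ⟨n, hn⟩ := s.2
  simp only at hs
  rw [← hn, ← map_mul] at hs
  obtain ⟨c, hc⟩ := (IsLocalization.eq_iff_exists (Submonoid.powers f) _).1 hs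
  obtain ⟨m, hm⟩ := c.2
  rw [← hm] at hc
  refine ⟨m + n, ?_⟩
  have he : f ^ (m + n) * x = f ^ m * (x * f ^ n) := by ring
  rw [he, hc]
  exact I.mul_mem_left _ hy

lemma mem_atTightClosure_of_subsingleton (p : ℕ) [Subsingleton S]
    {n : ℕ} (a : Fin n → Ideal S) (t : Fin n → ℝ) (J : Ideal S) (z : S) :
    z ∈ atTightClosure p a t J := by
  refine ⟨1, ?_, 0, ?_⟩
  · intro P hP _
    refine hP.1.1.ne_top ?_
    rw [Ideal.eq_top_iff_one]
    have h1 : (1 : S) = 0 := Subsingleton.elim _ _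
    rw [h1]; exact P.zero_mem
  · intro e _ x _
    have h1 : (1 : S) * x * z ^ p ^ e = 0 := Subsingleton.elim _ _
    rw [h1]; exact zero_mem _

end Aux

/-- `a^t`-tight closure of ideals is glueable. -/
theorem atTightClosure_glueable (p : ℕ) (hp : p.Prime)
    {R : Type*} [CommRing R] [IsNoetherianRing R] [CharP R p]
    {n : ℕ} (a : Fin n → Ideal R) (ha : ∀ i, ∃ c ∈ offMinimal R, c ∈ a i)
    (t : Fin n → ℝ) (ht : ∀ i, 0 ≤ t i)
    {A : Type*} (f : A → R) (g : R)
    (hg : g ∈ (Ideal.span (Set.range f)).radical)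
    (J : Ideal R) (z : R)
    (hz : ∀ α : A, algebraMap R (Localization.Away (f α)) z
      ∈ atTightClosure p (fun i => (a i).map (algebraMap R (Localization.Away (f α)))) t
          (J.map (algebraMap R (Localization.Away (f α))))) :
    algebraMap R (Localization.Away g) z
      ∈ atTightClosure p (fun i => (a i).map (algebraMap R (Localization.Away g))) t
          (J.map (algebraMap R (Localization.Away g))) := by
  classical
  rcases subsingleton_or_nontrivial (Localization.Away g) with hsub | hnontriv
  · exact mem_atTightClosure_of_subsingleton p _ t _ _
  set S := Localization.Away g with hS
  -- Step 1: a finite subfamily whose span's radical contains g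
  obtain ⟨m, hm⟩ := hg
  obtain ⟨T, hTsub, hgm⟩ := Submodule.mem_span_finite_of_mem_span hm
  have hchoice : ∀ y ∈ T, ∃ α : A, f α = y := fun y hy => hTsub hy
  choose idx hidx using hchoice
  set sA : Finset A := T.attach.image (fun y => idx y.1 y.2) with hsA
  have hgm' : g ^ m ∈ Ideal.span (f '' ↑sA) := by
    refine Ideal.span_mono ?_ hgm
    intro y hy
    exact ⟨idx y hy, Finset.mem_coe.2 (Finset.mem_image.2 ⟨⟨y, hy⟩, Finset.mem_attach _ _, rfl⟩),
      hidx y hy⟩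
  -- Step 2: data from the hypothesis
  simp only [atTightClosure, Set.mem_setOf_eq] at hz
  choose c hc e₀f hzP using hz
  have hsur : ∀ α : A, ∃ (r : R) (k : ℕ),
      c α * algebraMap R (Localization.Away (f α)) (f α ^ k) =
        algebraMap R (Localization.Away (f α)) r := by
    intro α
    obtain ⟨⟨r, s⟩, hs⟩ := IsLocalization.surj (Submonoid.powers (f α)) (c α)
    obtain ⟨k, hk⟩ := s.2
    exact ⟨r, k, by rw [show f α ^ k = (s : R) from hk]; exact hs⟩
  choose c' kk hc' using hsur
  have hc'' : ∀ α : A, algebraMap R (Localization.Away (f α)) (c' α) =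
      c α * (algebraMap R (Localization.Away (f α)) (f α)) ^ kk α := fun α => by
    rw [← hc' α, map_pow]
  -- (P1)
  have hP1 : ∀ α : A, ∀ P ∈ minimalPrimes R, f α ∉ P → c' α ∉ P := by
    intro α P hP hfP hcP
    have hmin := map_mem_minimalPrimes_away hP hfP
    have h1 : algebraMap R (Localization.Away (f α)) (c' α) ∈
        P.map (algebraMap R (Localization.Away (f α))) := Ideal.mem_map_of_mem _ hcP
    rw [← hc' α] at h1
    have hprime : (P.map (algebraMap R (Localization.Away (f α)))).IsPrime := hmin.1.1
    rcases hprime.mem_or_mem h1 with h | h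
    · exact hc α _ hmin h
    · have hunit : IsUnit (algebraMap R (Localization.Away (f α)) (f α ^ kk α)) :=
        IsLocalization.map_units _ (⟨f α ^ kk α, kk α, rfl⟩ : Submonoid.powers (f α))
      exact hprime.ne_top (Ideal.eq_top_of_isUnit_mem _ h hunit)
  -- (P2)
  have hP2 : ∀ α : A, ∀ e : ℕ, e₀f α ≤ e →
      ∀ y₀ ∈ (∏ i, a i ^ ⌈t i * (p : ℝ) ^ e⌉₊ : Ideal R),
      algebraMap R (Localization.Away (f α)) (c' α * y₀ * z ^ p ^ e) ∈
        bracketPow (J.map (algebraMap R (Localization.Away (f α)))) (p ^ e) := by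
    intro α e he y₀ hy₀
    have hx : algebraMap R (Localization.Away (f α)) y₀ ∈
        (∏ i, ((a i).map (algebraMap R (Localization.Away (f α)))) ^ ⌈t i * (p : ℝ) ^ e⌉₊ :
          Ideal (Localization.Away (f α))) := by
      rw [← map_prod_pow]
      exact Ideal.mem_map_of_mem _ hy₀
    have h0 := hzP α e he _ hx
    have h2 := Ideal.mul_mem_left _ (algebraMap R (Localization.Away (f α)) (f α ^ kk α)) h0
    have heq : algebraMap R (Localization.Away (f α)) (f α ^ kk α) *
        (c α * algebraMap R (Localization.Away (f α)) y₀ *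
          (algebraMap R (Localization.Away (f α)) z) ^ p ^ e) =
        algebraMap R (Localization.Away (f α)) (c' α * y₀ * z ^ p ^ e) := by
      simp only [map_mul, map_pow, hc'']
      ring
    rwa [heq] at h2
  -- the saturation ideals
  set II : A → Ideal R := fun α =>
    ((Ideal.span {c' α}).map (algebraMap R (Localization.Away (f α)))).comap
      (algebraMap R (Localization.Away (f α))) with hII
  have hC1 : ∀ P ∈ minimalPrimes R, g ∉ P → ∀ α : A, ¬ II α ≤ P := by
    intro P hP hgP α hle
    by_cases hfP : f α ∈ P
    · obtain ⟨u, huP, k, hu⟩ := exists_mul_pow_eq_zero hP hfP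
      apply huP; apply hle
      refine Ideal.mem_comap.mpr ?_
      have hunit : IsUnit (algebraMap R (Localization.Away (f α)) (f α ^ k)) :=
        IsLocalization.map_units _ (⟨f α ^ k, k, rfl⟩ : Submonoid.powers (f α))
      refine mem_of_mul_unit' hunit ?_
      rw [← map_mul, hu, map_zero]; exact zero_mem _
    · exact hP1 α P hP hfP
        (hle (Ideal.mem_comap.2 (Ideal.mem_map_of_mem _ (Ideal.subset_span rfl))))
  -- prime avoidance
  have hfinP : {P : Ideal R | P ∈ minimalPrimes R ∧ g ∉ P}.Finite :=
    (minimalPrimes.finite_of_isNoetherianRing R).subset fun P hP => hP.1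
  set PF : Finset (Ideal R) := hfinP.toFinset with hPF
  set Tid : Ideal R := ∏ α ∈ sA, II α with hTid
  have hnotsub : ¬ ((Tid : Set R) ⊆ ⋃ P ∈ (↑PF : Set (Ideal R)), (P : Set R)) := by
    intro hsub
    have hp' : ∀ P ∈ PF, P ≠ ⊥ → P ≠ ⊥ → P.IsPrime := fun P hPmem _ _ =>
      ((hfinP.mem_toFinset).1 hPmem).1.1.1
    obtain ⟨P, hPmem, hle⟩ := (Ideal.subset_union_prime (⊥ : Ideal R) ⊥ hp').1 hsub
    rw [hfinP.mem_toFinset] at hPmem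
    obtain ⟨α, hα, hle'⟩ := (Ideal.IsPrime.prod_le hPmem.1.1.1).1 hle
    exact hC1 P hPmem.1 hPmem.2 α hle'
  obtain ⟨d, hdT, hdU⟩ := Set.not_subset.1 hnotsub
  have hdP : ∀ P ∈ minimalPrimes R, g ∉ P → d ∉ P := by
    intro P hP hgP hdmem
    exact hdU (Set.mem_biUnion (Finset.mem_coe.2 (hfinP.mem_toFinset.2 ⟨hP, hgP⟩)) hdmem)
  -- final assembly
  refine ⟨algebraMap R S d, ?_, sA.sup e₀f, ?_⟩
  · intro Q hQ hdQ
    obtain ⟨hQP, hgQ⟩ := comap_mem_minimalPrimes_away hQ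
    exact hdP _ hQP hgQ (Ideal.mem_comap.2 hdQ)
  · intro e he x hx
    have hx' : x ∈ ((∏ i, a i ^ ⌈t i * (p : ℝ) ^ e⌉₊ : Ideal R)).map (algebraMap R S) := by
      rw [map_prod_pow]
      exact hx
    obtain ⟨⟨⟨y₀, hy₀⟩, s0⟩, hs0⟩ :=
      (IsLocalization.mem_map_algebraMap_iff (Submonoid.powers g) S).1 hx'
    obtain ⟨nn, hnn⟩ := s0.2
    set q := p ^ e with hq
    set w : R := d * (y₀ * z ^ q) with hw
    have hclaim1 : ∀ α ∈ sA, ∃ N : ℕ, f α ^ N * w ∈ bracketPow J q := by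
      intro α hα
      have hdI : d ∈ II α := (le_trans Ideal.prod_le_inf (Finset.inf_le hα)) hdT
      have hdI' : algebraMap R (Localization.Away (f α)) d ∈
          (Ideal.span {c' α}).map (algebraMap R (Localization.Away (f α))) := hdI
      rw [Ideal.map_span, Set.image_singleton, Ideal.mem_span_singleton'] at hdI'
      obtain ⟨r, hr⟩ := hdI'
      have hmem := hP2 α e (le_trans (Finset.le_sup hα) he) y₀ hy₀
      have hmem2 : algebraMap R (Localization.Away (f α)) (c' α * y₀ * z ^ q) ∈
          (bracketPow J q).map (algebraMap R (Localization.Away (f α))) := by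
        refine bracketPow_map_le p hp _ ?_ J e hmem
        rw [← map_natCast (algebraMap R (Localization.Away (f α))) p,
          CharP.cast_eq_zero R p, map_zero]
      have hmem3 : algebraMap R (Localization.Away (f α)) w ∈
          (bracketPow J q).map (algebraMap R (Localization.Away (f α))) := by
        have heq : algebraMap R (Localization.Away (f α)) w =
            r * algebraMap R (Localization.Away (f α)) (c' α * y₀ * z ^ q) := by
          simp only [hw, map_mul, map_pow]
          rw [← hr]
          ring
        rw [heq]
        exact Ideal.mul_mem_left _ r hmem2
      exact exists_pow_mul_mem hmem3
    choose NN hNN using hclaim1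
    have hgrad : g ∈ ((bracketPow J q).colon (Ideal.span {w})).radical := by
      have hspan : Ideal.span (f '' ↑sA) ≤ ((bracketPow J q).colon (Ideal.span {w})).radical := by
        refine Ideal.span_le.2 ?_
        rintro _ ⟨α, hα, rfl⟩
        exact ⟨NN α hα, Ideal.mem_colon_span_singleton.2 (hNN α hα)⟩
      exact Ideal.mem_radical_of_pow_mem (hspan hgm')
    obtain ⟨M, hM⟩ := hgrad
    have hMw : g ^ M * w ∈ bracketPow J q := Ideal.mem_colon_span_singleton.1 hM
    have hfin : algebraMap R S (g ^ M * w) ∈ bracketPow (J.map (algebraMap R S)) q :=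
      map_bracketPow_le (algebraMap R S) J q (Ideal.mem_map_of_mem _ hMw)
    have hunit : IsUnit (algebraMap R S (g ^ (nn + M))) :=
      IsLocalization.map_units S (⟨g ^ (nn + M), nn + M, rfl⟩ : Submonoid.powers g)
    refine mem_of_mul_unit' hunit ?_
    have hs0' : x * algebraMap R S (g ^ nn) = algebraMap R S y₀ := by
      rw [show g ^ nn = (s0 : R) from hnn]; exact hs0
    have heq : algebraMap R S d * x * (algebraMap R S z) ^ q * algebraMap R S (g ^ (nn + M)) =
        algebraMap R S (g ^ M * w) := by
      rw [pow_add, map_mul]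
      calc algebraMap R S d * x * (algebraMap R S z) ^ q *
            (algebraMap R S (g ^ nn) * algebraMap R S (g ^ M))
          = algebraMap R S (g ^ M) * (algebraMap R S d *
              ((x * algebraMap R S (g ^ nn)) * (algebraMap R S z) ^ q)) := by ring
        _ = algebraMap R S (g ^ M * w) := by
            rw [hs0']
            simp only [hw, map_mul, map_pow]
    rw [heq]
    exact hfin
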